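/- Let M = ℕ * ℕ be the free monoid on two generators α, β, with the involution x ↦ x̄ exchanging α and β. Define on the free commutative monoid ℕ·M a product by r_x ⊗ r_y = Σ r_{ab}, the sum over all factorizations x = a g, y = ḡ b in M. Then this product is associative. -/

import Mathlib

-- The free monoid on two generators `α, β` is modelled as `List Bool`.
/-- The involution exchanging the two generators: `(u v)‾ = v̄ ū`. -/
def wbar (x : List Bool) : List Bool := (x.map not).reverse

/-- The fusion product on basis elements: `r_x ⊗ r_y = Σ_{x = a g, y = ḡ b} r_{a b}`,
as a multiset (element of the free commutative monoid `ℕ·M`). -/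
def fuseBasis (x y : List Bool) : Multiset (List Bool) :=
  ((List.range (x.length + 1)).filterMap fun i =>
    let g := x.drop i
    if y.take g.length = wbar g then some (x.take i ++ y.drop g.length) else none : List (List Bool))


@[simp] lemma wbar_length (x : List Bool) : (wbar x).length = x.length := by simp [wbar]
lemma wbar_append (x y : List Bool) : wbar (x ++ y) = wbar y ++ wbar x := by simp [wbar]

def cnd (x y : List Bool) (i : ℕ) : Prop := y.take (x.length - i) = wbar (x.drop i)
instance (x y : List Bool) (i : ℕ) : Decidable (cnd x y i) := by unfold cnd; infer_instance
def trm (x y : List Bool) (i : ℕ) : List Bool := x.take i ++ y.drop (x.length - i)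

lemma list_filterMap_sum {α β : Type*} (l : List α) (f : α → Option β) :
    (↑(l.filterMap f) : Multiset β)
      = (l.map fun i => (((f i).map fun b => ({b} : Multiset β)).getD 0)).sum := by
  induction l with
  | nil => rfl
  | cons a l ih =>
      cases h : f a with
      | none => simp [List.filterMap_cons, h, ih]
      | some b =>
          simp only [List.filterMap_cons, h, List.map_cons, List.sum_cons, Option.map_some,
            Option.getD_some, ← ih]
          rfl

lemma fuseBasis_eq_sum (x y : List Bool) :
    fuseBasis x y = ∑ i ∈ Finset.range (x.length + 1),
      if cnd x y i then ({trm x y i} : Multiset (List Bool)) else 0 := by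
  rw [fuseBasis, list_filterMap_sum]
  rw [Finset.sum]
  have : (Finset.range (x.length + 1)).val = ↑(List.range (x.length + 1)) := rfl
  rw [this, Multiset.map_coe, Multiset.sum_coe]
  congr 1
  apply List.map_congr_left
  intro i _
  simp only [List.length_drop, cnd, trm]
  split_ifs <;> simp_all

lemma fuseBasis_eq_sum' (x y : List Bool) {B : ℕ} (hB : x.length < B) :
    fuseBasis x y = ∑ i ∈ Finset.range B,
      if i ≤ x.length ∧ cnd x y i then ({trm x y i} : Multiset (List Bool)) else 0 := by
  rw [fuseBasis_eq_sum]
  have h1 : ∑ i ∈ Finset.range (x.length + 1),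
      (if cnd x y i then ({trm x y i} : Multiset (List Bool)) else 0)
      = ∑ i ∈ Finset.range (x.length + 1),
      (if i ≤ x.length ∧ cnd x y i then ({trm x y i} : Multiset (List Bool)) else 0) := by
    apply Finset.sum_congr rfl
    intro i hi
    rw [Finset.mem_range, Nat.lt_succ_iff] at hi
    simp [hi]
  rw [h1]
  apply Finset.sum_subset
  · exact Finset.range_subset_range.2 hB
  · intro i _ hni
    rw [Finset.mem_range, Nat.lt_succ_iff] at hni
    rw [if_neg (fun h => hni h.1)]

lemma sum_bind {ι α β : Type*} (s : Finset ι) (f : ι → Multiset α) (g : α → Multiset β) :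
    (∑ i ∈ s, f i).bind g = ∑ i ∈ s, (f i).bind g := by
  classical
  induction s using Finset.induction with
  | empty => simp
  | insert _ _ h ih => simp [Finset.sum_insert h, Multiset.add_bind, ih]

lemma ifbind (P : Prop) [Decidable P] (t : List Bool) (g : List Bool → Multiset (List Bool)) :
    (if P then ({t} : Multiset (List Bool)) else 0).bind g = if P then g t else 0 := by
  split_ifs <;> simp

lemma cnd_le {x y : List Bool} {i : ℕ} (h : cnd x y i) : x.length - i ≤ y.length := by
  have := congrArg List.length h
  simpa using this.symm.le.trans (by simp)

lemma trm_length {x y : List Bool} {i : ℕ} (hi : i ≤ x.length) (h : cnd x y i) :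
    (trm x y i).length = i + (y.length - (x.length - i)) := by
  have := cnd_le h
  simp [trm]; omega

lemma fwd1 {x y z : List Bool} {i j : ℕ} (hi : i ≤ x.length) (h1 : cnd x y i)
    (hj : j ≤ (trm x y i).length) (h2 : cnd (trm x y i) z j) (hij : i ≤ j) :
    (x.length - i) + (j - i) ≤ y.length ∧ cnd y z ((x.length - i) + (j - i)) ∧
      cnd x (trm y z ((x.length - i) + (j - i))) i ∧
      trm (trm x y i) z j = trm x (trm y z ((x.length - i) + (j - i))) i := by
  set X := x.length with hX
  set Y := y.length with hY
  set K := X - i with hK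
  set l := K + (j - i) with hl
  have hKY : K ≤ Y := cnd_le h1
  have hW : (trm x y i).length = i + (Y - K) := trm_length hi h1
  have hlY : l ≤ Y := by omega
  have hWjYl : (trm x y i).length - j = Y - l := by omega
  have hE1 : (trm x y i).drop j = y.drop l := by
    rw [trm, List.drop_append, List.drop_eq_nil_of_le (by simp; omega),
      List.drop_drop]
    simp only [List.nil_append]
    congr 1
    simp [hl]; omega
  have hb : cnd y z l := by
    rw [cnd, ← hWjYl, ← hE1]; exact h2
  refine ⟨hlY, hb, ?_, ?_⟩
  · rw [cnd, trm, List.take_append]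
    have h5 : (y.take l).length = l := by simp; omega
    rw [h5, ← hX]
    have h6 : (y.take l).take K = y.take K := by rw [List.take_take]; congr 1; omega
    rw [h6, show K - l = 0 by omega, List.take_zero, List.append_nil]
    exact h1
  · have h7 : (trm x y i).take j = x.take i ++ (y.drop K).take (j - i) := by
      rw [trm, List.take_append]
      have : (x.take i).length = i := by simp; omega
      rw [this]
      congr 1
      rw [List.take_take]; congr 1; omega
    have h8 : (trm y z l).drop K = (y.drop K).take (j - i) ++ z.drop (Y - l) := by
      rw [trm, List.drop_append]
      have h5 : (y.take l).length = l := by simp; omega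
      rw [h5, show K - l = 0 by omega, List.drop_zero, List.drop_take, ← hY,
        show l - K = j - i by omega]
    calc trm (trm x y i) z j
        = (trm x y i).take j ++ z.drop ((trm x y i).length - j) := rfl
      _ = x.take i ++ ((y.drop K).take (j - i) ++ z.drop (Y - l)) := by
            rw [h7, hWjYl, List.append_assoc]
      _ = x.take i ++ (trm y z l).drop K := by rw [h8]
      _ = trm x (trm y z l) i := rfl

lemma fwd2 {x y z : List Bool} {i j : ℕ} (hi : i ≤ x.length) (h1 : cnd x y i)
    (hj : j ≤ (trm x y i).length) (h2 : cnd (trm x y i) z j) (hij : j < i) :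
    (x.length - i) ≤ y.length ∧ cnd y z (x.length - i) ∧
      cnd x (trm y z (x.length - i)) j ∧
      trm (trm x y i) z j = trm x (trm y z (x.length - i)) j := by
  set X := x.length with hX
  set Y := y.length with hY
  set K := X - i with hK
  have hKY : K ≤ Y := cnd_le h1
  have hW : (trm x y i).length = i + (Y - K) := trm_length hi h1
  have hu : ((x.take i).drop j).length = i - j := by simp; omega
  have hE1 : (trm x y i).drop j = (x.take i).drop j ++ y.drop K := by
    rw [trm, List.drop_append]
    congr 1
    rw [show j - (x.take i).length = 0 by simp; omega, List.drop_zero]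
  have h2' : z.take ((trm x y i).length - j) = wbar (y.drop K) ++ wbar ((x.take i).drop j) := by
    rw [h2, hE1, wbar_append]
  have hbwl : (wbar (y.drop K)).length = Y - K := by simp [hY]
  have hb : cnd y z K := by
    rw [cnd]
    have : z.take (Y - K) = (z.take ((trm x y i).length - j)).take (Y - K) := by
      rw [List.take_take]; congr 1; omega
    rw [this, h2', List.take_append, hbwl,
      List.take_of_length_le (le_of_eq hbwl), show Y - K - (Y - K) = 0 by omega,
      List.take_zero, List.append_nil]
  have hzu : (z.drop (Y - K)).take (i - j) = wbar ((x.take i).drop j) := by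
    have hm : (trm x y i).length - j = (Y - K) + (i - j) := by omega
    have := congrArg (List.drop (Y - K)) h2'
    rw [List.drop_take, List.drop_append, hbwl,
      List.drop_eq_nil_of_le (le_of_eq hbwl), show Y - K - (Y - K) = 0 by omega,
      List.drop_zero, List.nil_append, hm, show (Y-K) + (i-j) - (Y-K) = i - j by omega] at this
    exact this
  refine ⟨hKY, hb, ?_, ?_⟩
  · rw [cnd, ← hX]
    have hxj : x.drop j = (x.take i).drop j ++ x.drop i := by
      conv_lhs => rw [← List.take_append_drop (i - j) (x.drop j)]
      rw [List.drop_drop, show j + (i - j) = i by omega, List.drop_take]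
    rw [hxj, wbar_append]
    rw [trm, ← hY, List.take_append]
    have h5 : (y.take K).length = K := by simp; omega
    rw [h5, List.take_of_length_le (by rw [h5]; omega), show X - j - K = i - j by omega,
      hzu, h1]
  · have h7 : (trm x y i).take j = x.take j := by
      rw [trm, List.take_append, show j - (x.take i).length = 0 by simp; omega,
        List.take_zero, List.append_nil, List.take_take, show min j i = j by omega]
    have h8 : (trm y z K).drop (X - j) = z.drop ((trm x y i).length - j) := by
      rw [trm, ← hY, List.drop_append]
      have h5 : (y.take K).length = K := by simp; omega
      rw [List.drop_eq_nil_of_le (by rw [h5]; omega), List.nil_append, h5, List.drop_drop]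
      congr 1
      omega
    calc trm (trm x y i) z j
        = (trm x y i).take j ++ z.drop ((trm x y i).length - j) := rfl
      _ = x.take j ++ (trm y z K).drop (X - j) := by rw [h7, h8]
      _ = trm x (trm y z K) j := rfl

lemma bwdA {x y z : List Bool} {l n : ℕ} (hl : l ≤ y.length) (h1 : cnd y z l)
    (hn : n ≤ x.length) (h2 : cnd x (trm y z l) n) (hA : x.length - n ≤ l) :
    cnd x y n ∧ (l - (x.length - n) + n) ≤ (trm x y n).length ∧
      cnd (trm x y n) z (l - (x.length - n) + n) := by
  set X := x.length with hX
  set Y := y.length with hY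
  set K := X - n with hK
  set j := l - K + n with hj
  have h2e : (trm y z l).take (X - n) = wbar (x.drop n) := h2
  have ha : cnd x y n := by
    show y.take (X - n) = wbar (x.drop n)
    rw [← h2e, trm, List.take_append]
    have h5 : (y.take l).length = l := by simp; omega
    rw [h5, show X - n - l = 0 by omega, List.take_zero, List.append_nil, List.take_take,
      show min (X - n) l = X - n by omega]
  have hKY : K ≤ Y := cnd_le ha
  have hW : (trm x y n).length = n + (Y - K) := trm_length hn ha
  refine ⟨ha, by omega, ?_⟩
  show z.take ((trm x y n).length - j) = wbar ((trm x y n).drop j)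
  have hE1 : (trm x y n).drop j = y.drop l := by
    rw [trm, List.drop_append, List.drop_eq_nil_of_le (by simp; omega),
      List.drop_drop, List.nil_append]
    congr 1
    simp; omega
  rw [hE1, show (trm x y n).length - j = Y - l by omega]
  exact h1

lemma bwdB {x y z : List Bool} {l n : ℕ} (hl : l ≤ y.length) (h1 : cnd y z l)
    (hn : n ≤ x.length) (h2 : cnd x (trm y z l) n) (hB : l < x.length - n) :
    cnd x y (x.length - l) ∧ n ≤ (trm x y (x.length - l)).length ∧
      cnd (trm x y (x.length - l)) z n := by
  set X := x.length with hX
  set Y := y.length with hY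
  have hlX : l ≤ X := by omega
  set A := (x.drop n).take (X - l - n) with hA
  have hxn : x.drop n = A ++ x.drop (X - l) := by
    conv_lhs => rw [← List.take_append_drop (X - l - n) (x.drop n)]
    rw [List.drop_drop, show n + (X - l - n) = X - l by omega]
  have hlen1 : (y.take l).length = l := by simp; omega
  have hlen2 : (wbar (x.drop (X - l))).length = l := by simp; omega
  have h2e : (trm y z l).take (X - n) = wbar (x.drop n) := h2
  have h2' : y.take l ++ (z.drop (Y - l)).take (X - n - l)
      = wbar (x.drop (X - l)) ++ wbar A := by
    rw [← wbar_append, ← hxn, ← h2e, trm, List.take_append, hlen1,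
      List.take_take, show min (X - n) l = l by omega]
  obtain ⟨hp, hq⟩ := List.append_inj h2' (by rw [hlen1, hlen2])
  have ha : cnd x y (X - l) := by
    show y.take (X - (X - l)) = wbar (x.drop (X - l))
    rw [show X - (X - l) = l by omega]
    exact hp
  have hKY : X - (X - l) ≤ Y := cnd_le ha
  have hW : (trm x y (X - l)).length = (X - l) + (Y - (X - (X - l))) :=
    trm_length (by omega) ha
  refine ⟨ha, by omega, ?_⟩
  show z.take ((trm x y (X - l)).length - n) = wbar ((trm x y (X - l)).drop n)
  have hE1 : (trm x y (X - l)).drop n = A ++ y.drop l := by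
    rw [trm, List.drop_append]
    have h5 : (x.take (X - l)).length = X - l := by rw [List.length_take]; omega
    rw [h5, show n - (X - l) = 0 by omega, List.drop_zero, List.drop_take]
    congr 1
    congr 1
    omega
  rw [hE1, wbar_append, show (trm x y (X - l)).length - n = (Y - l) + (X - n - l) by omega,
    List.take_add]
  exact congrArg₂ (· ++ ·) h1 hq

section KeyTest
variable (x y z : List Bool)

lemma L1 (x y z : List Bool) :
    (fuseBasis x y).bind (fun w => fuseBasis w z)
      = ∑ p ∈ (Finset.range (x.length + 1) ×ˢ Finset.range (x.length + y.length + 1)),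
          if cnd x y p.1 ∧ p.2 ≤ (trm x y p.1).length ∧ cnd (trm x y p.1) z p.2
          then ({trm (trm x y p.1) z p.2} : Multiset (List Bool)) else 0 := by
  rw [fuseBasis_eq_sum, sum_bind, Finset.sum_product]
  apply Finset.sum_congr rfl
  intro i _
  rw [ifbind]
  by_cases hc : cnd x y i
  · rw [if_pos hc, fuseBasis_eq_sum' (trm x y i) z (B := x.length + y.length + 1)
      (by simp [trm]; omega)]
    apply Finset.sum_congr rfl
    intro j _
    simp [hc]
  · rw [if_neg hc]
    symm
    apply Finset.sum_eq_zero
    intro j _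
    simp [hc]

lemma R1 (x y z : List Bool) :
    (fuseBasis y z).bind (fun w => fuseBasis x w)
      = ∑ q ∈ (Finset.range (y.length + 1) ×ˢ Finset.range (x.length + 1)),
          if cnd y z q.1 ∧ cnd x (trm y z q.1) q.2
          then ({trm x (trm y z q.1) q.2} : Multiset (List Bool)) else 0 := by
  rw [fuseBasis_eq_sum, sum_bind, Finset.sum_product]
  apply Finset.sum_congr rfl
  intro l _
  rw [ifbind]
  by_cases hc : cnd y z l
  · rw [if_pos hc, fuseBasis_eq_sum x (trm y z l)]
    apply Finset.sum_congr rfl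
    intro n _
    simp [hc]
  · rw [if_neg hc]
    symm
    apply Finset.sum_eq_zero
    intro n _
    simp [hc]

end KeyTest

lemma key (x y z : List Bool) :
    (fuseBasis x y).bind (fun w => fuseBasis w z)
      = (fuseBasis y z).bind (fun w => fuseBasis x w) := by
  rw [L1 x y z, R1 x y z, ← Finset.sum_filter, ← Finset.sum_filter]
  apply Finset.sum_nbij'
    (i := fun p : ℕ × ℕ => if p.1 ≤ p.2 then ((x.length - p.1) + (p.2 - p.1), p.1)
      else (x.length - p.1, p.2))
    (j := fun q : ℕ × ℕ => if x.length - q.2 ≤ q.1 then (q.2, q.1 - (x.length - q.2) + q.2)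
      else (x.length - q.1, q.2))
  · -- hi
    rintro ⟨i, j⟩ hp
    rw [Finset.mem_filter, Finset.mem_product, Finset.mem_range, Finset.mem_range,
      Nat.lt_succ_iff] at hp
    obtain ⟨⟨hi, hjB⟩, h1, hj, h2⟩ := hp
    rw [Finset.mem_filter, Finset.mem_product, Finset.mem_range, Finset.mem_range,
      Nat.lt_succ_iff, Nat.lt_succ_iff]
    by_cases hij : i ≤ j
    · obtain ⟨ha, hb, hc, _⟩ := fwd1 hi h1 hj h2 hij
      simp only [if_pos hij]
      exact ⟨⟨by omega, hi⟩, hb, hc⟩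
    · obtain ⟨ha, hb, hc, _⟩ := fwd2 hi h1 hj h2 (by omega)
      simp only [if_neg hij]
      exact ⟨⟨by omega, by omega⟩, hb, hc⟩
  · -- hj
    rintro ⟨l, n⟩ hq
    rw [Finset.mem_filter, Finset.mem_product, Finset.mem_range, Finset.mem_range,
      Nat.lt_succ_iff, Nat.lt_succ_iff] at hq
    obtain ⟨⟨hl, hn⟩, h1, h2⟩ := hq
    rw [Finset.mem_filter, Finset.mem_product, Finset.mem_range, Finset.mem_range,
      Nat.lt_succ_iff]
    by_cases hA : x.length - n ≤ l
    · obtain ⟨ha, hb, hc⟩ := bwdA hl h1 hn h2 hA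
      simp only [if_pos hA]
      exact ⟨⟨hn, by omega⟩, ha, hb, hc⟩
    · obtain ⟨ha, hb, hc⟩ := bwdB hl h1 hn h2 (by omega)
      simp only [if_neg hA]
      exact ⟨⟨by omega, by omega⟩, ha, hb, hc⟩
  · -- left_inv
    rintro ⟨i, j⟩ hp
    rw [Finset.mem_filter, Finset.mem_product, Finset.mem_range, Finset.mem_range,
      Nat.lt_succ_iff] at hp
    obtain ⟨⟨hi, hjB⟩, h1, hj, h2⟩ := hp
    by_cases hij : i ≤ j
    · simp only [if_pos hij]
      rw [if_pos (by omega)]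
      ext <;> simp <;> omega
    · simp only [if_neg hij]
      rw [if_neg (by omega)]
      ext <;> simp <;> omega
  · -- right_inv
    rintro ⟨l, n⟩ hq
    rw [Finset.mem_filter, Finset.mem_product, Finset.mem_range, Finset.mem_range,
      Nat.lt_succ_iff, Nat.lt_succ_iff] at hq
    obtain ⟨⟨hl, hn⟩, h1, h2⟩ := hq
    by_cases hA : x.length - n ≤ l
    · simp only [if_pos hA]
      rw [if_pos (by omega)]
      ext <;> simp <;> omega
    · simp only [if_neg hA]
      rw [if_neg (by omega)]
      ext <;> simp <;> omega
  · -- term equality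
    rintro ⟨i, j⟩ hp
    rw [Finset.mem_filter, Finset.mem_product, Finset.mem_range, Finset.mem_range,
      Nat.lt_succ_iff] at hp
    obtain ⟨⟨hi, hjB⟩, h1, hj, h2⟩ := hp
    by_cases hij : i ≤ j
    · obtain ⟨_, _, _, hd⟩ := fwd1 hi h1 hj h2 hij
      simp only [if_pos hij]
      exact congrArg _ hd
    · obtain ⟨_, _, _, hd⟩ := fwd2 hi h1 hj h2 (by omega)
      simp only [if_neg hij]
      exact congrArg _ hd


/-- The bilinear extension of the fusion product to `ℕ·M` (multisets of words). -/
def fuse (S T : Multiset (List Bool)) : Multiset (List Bool) :=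
  S.bind fun x => T.bind fun y => fuseBasis x y

/-- The fusion product of the free unitary quantum group is associative. -/
theorem stmt_2 (S T U : Multiset (List Bool)) :
    fuse (fuse S T) U = fuse S (fuse T U) := by
  simp only [fuse, Multiset.bind_assoc]
  apply Multiset.bind_congr
  intro x _
  apply Multiset.bind_congr
  intro y _
  rw [Multiset.bind_bind]
  apply Multiset.bind_congr
  intro z _
  exact key x y z
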